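/- Let Ω ⊂ ℝ^{nm} be a nonempty closed convex set, f̃ : ℝ^{nm} → ℝ convex differentiable, L̄ ∈ ℝ^{n×n} symmetric positive semidefinite, and let (X*, Λ*) ∈ Ω × ℝ^{nm} be a saddle point of Φ(X,Λ) = f̃(X) + Λᵀ(L̄ ⊗ I_m)X in Ω × ℝ^{nm} with (L̄ ⊗ I_m)X* = 0. Then for every X ∈ Ω, Λ ∈ ℝ^{nm}, and Z ∈ N_Ω(X): (X − X*)ᵀ( −∇f̃(X) − (L̄⊗I_m)(X + Λ) − Z ) + (Λ − Λ*)ᵀ (L̄⊗I_m) X ≤ Φ(X*, Λ*) − Φ(X, Λ*) − Xᵀ(L̄⊗I_m)X ≤ 0. -/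

import Mathlib

open Matrix BigOperators
open scoped Kronecker RealInnerProductSpace

/-- Package a plain function as an element of Euclidean space. -/
noncomputable def euc {ι : Type*} [Fintype ι] (x : ι → ℝ) : EuclideanSpace ℝ ι :=
  (WithLp.equiv 2 (ι → ℝ)).symm x

/-- The action of `L̄ ⊗ I_m` on `ℝ^{nm}` (with the Euclidean structure). -/
noncomputable def kronAct {n m : ℕ} (Lbar : Matrix (Fin n) (Fin n) ℝ)
    (X : EuclideanSpace ℝ (Fin n × Fin m)) : EuclideanSpace ℝ (Fin n × Fin m) :=
  euc ((Lbar ⊗ₖ (1 : Matrix (Fin m) (Fin m) ℝ)).mulVec (fun p => X p))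

lemma kronAct_apply {n m : ℕ} (L : Matrix (Fin n) (Fin n) ℝ)
    (x : EuclideanSpace ℝ (Fin n × Fin m)) (p : Fin n × Fin m) :
    kronAct L x p = ∑ k, L p.1 k * x (k, p.2) := by
  simp only [kronAct, euc, WithLp.equiv_symm_apply, PiLp.toLp_apply, mulVec, dotProduct,
    kroneckerMap_apply, Matrix.one_apply]
  rw [Fintype.sum_prod_type]
  refine Finset.sum_congr rfl fun k _ => ?_
  simp [Finset.sum_ite_eq, mul_comm]

lemma inner_kronAct {n m : ℕ} (L : Matrix (Fin n) (Fin n) ℝ)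
    (x y : EuclideanSpace ℝ (Fin n × Fin m)) :
    ⟪x, kronAct L y⟫ =
      ∑ j : Fin m, (fun i => x (i, j)) ⬝ᵥ L *ᵥ (fun i => y (i, j)) := by
  simp only [PiLp.inner_apply, RCLike.inner_apply, starRingEnd_apply, star_trivial,
    kronAct_apply, dotProduct, mulVec]
  rw [Fintype.sum_prod_type, Finset.sum_comm]
  exact Finset.sum_congr rfl fun j _ => Finset.sum_congr rfl fun i _ => mul_comm _ _

lemma kronAct_symm {n m : ℕ} {L : Matrix (Fin n) (Fin n) ℝ} (hL : L.PosSemidef)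
    (x y : EuclideanSpace ℝ (Fin n × Fin m)) :
    ⟪x, kronAct L y⟫ = ⟪y, kronAct L x⟫ := by
  have hLs : Lᵀ = L := by
    have := hL.1; rwa [Matrix.IsHermitian, conjTranspose_eq_transpose_of_trivial] at this
  rw [inner_kronAct, inner_kronAct]
  refine Finset.sum_congr rfl fun j _ => ?_
  rw [Matrix.dotProduct_mulVec, ← Matrix.mulVec_transpose, hLs]
  exact dotProduct_comm _ _

lemma kronAct_nonneg {n m : ℕ} {L : Matrix (Fin n) (Fin n) ℝ} (hL : L.PosSemidef)
    (x : EuclideanSpace ℝ (Fin n × Fin m)) :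
    0 ≤ ⟪x, kronAct L x⟫ := by
  rw [inner_kronAct]
  refine Finset.sum_nonneg fun j _ => ?_
  have := hL.dotProduct_mulVec_nonneg (fun i => x (i, j))
  simpa using this

lemma kronAct_add {n m : ℕ} (L : Matrix (Fin n) (Fin n) ℝ)
    (x y : EuclideanSpace ℝ (Fin n × Fin m)) :
    kronAct L (x + y) = kronAct L x + kronAct L y := by
  ext p
  simp [kronAct_apply, mul_add, Finset.sum_add_distrib]

lemma kronAct_sub {n m : ℕ} (L : Matrix (Fin n) (Fin n) ℝ)
    (x y : EuclideanSpace ℝ (Fin n × Fin m)) :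
    kronAct L (x - y) = kronAct L x - kronAct L y := by
  ext p
  simp [kronAct_apply, mul_sub, Finset.sum_sub_distrib]

/-- Gradient inequality for convex functions. -/
lemma grad_ineq {H : Type*} [NormedAddCommGroup H] [InnerProductSpace ℝ H] [CompleteSpace H]
    {f : H → ℝ} (hconv : ConvexOn ℝ Set.univ f) {g x : H} (h : HasGradientAt f g x) (y : H) :
    f x + ⟪g, y - x⟫ ≤ f y := by
  set v := y - x with hv
  have hc : HasDerivAt (fun t : ℝ => x + t • v) v 0 := by
    simpa using ((hasDerivAt_id (0:ℝ)).smul_const v).const_add x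
  have hφ : HasDerivAt (fun t : ℝ => f (x + t • v)) ⟪g, v⟫ 0 := by
    have hfd : HasFDerivAt f (InnerProductSpace.toDual ℝ H g) ((fun t : ℝ => x + t • v) 0) := by
      simpa using h.hasFDerivAt
    have := hfd.comp_hasDerivAt 0 hc
    simp at this
    exact this
  have key : ⟪g, v⟫ ≤ f y - f x := by
    have htend : Filter.Tendsto (fun t : ℝ => (f (x + t • v) - f x) / t)
        (nhdsWithin 0 (Set.Ioi 0)) (nhds ⟪g, v⟫) := by
      have := hφ.hasDerivWithinAt (s := Set.Ioi 0)
      rw [hasDerivWithinAt_iff_tendsto_slope] at this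
      have h2 : Set.Ioi (0:ℝ) \ {0} = Set.Ioi 0 :=
        Set.diff_singleton_eq_self (by simp)
      rw [h2] at this
      refine this.congr fun t => ?_
      simp [slope_def_field]
    refine le_of_tendsto htend ?_
    filter_upwards [Ioc_mem_nhdsGT_of_mem (by norm_num : (0:ℝ) ∈ Set.Ico 0 1)] with t ht
    obtain ⟨ht0, ht1⟩ := ht
    have hcv := hconv.2 (Set.mem_univ x) (Set.mem_univ y)
      (show (0:ℝ) ≤ 1 - t by linarith) ht0.le (by ring)
    have hpt : (1 - t) • x + t • y = x + t • v := by
      rw [hv]; module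
    rw [hpt] at hcv
    rw [div_le_iff₀ ht0]
    simp only [smul_eq_mul] at hcv
    nlinarith
  have : ⟪g, y - x⟫ ≤ f y - f x := key
  linarith

theorem statement16 {n m : ℕ}
    (Ω : Set (EuclideanSpace ℝ (Fin n × Fin m)))
    (hΩne : Ω.Nonempty) (hΩclosed : IsClosed Ω) (hΩconv : Convex ℝ Ω)
    (ftil : EuclideanSpace ℝ (Fin n × Fin m) → ℝ)
    (hconv : ConvexOn ℝ Set.univ ftil)
    (Df : EuclideanSpace ℝ (Fin n × Fin m) → EuclideanSpace ℝ (Fin n × Fin m))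
    (hdiff : ∀ X, HasGradientAt ftil (Df X) X)
    (Lbar : Matrix (Fin n) (Fin n) ℝ) (hLbar : Lbar.PosSemidef)
    (Xs Λs : EuclideanSpace ℝ (Fin n × Fin m))
    (hXsΩ : Xs ∈ Ω) (hXsker : kronAct Lbar Xs = 0)
    -- (Xs, Λs) is a saddle point of Φ(X,Λ) = f̃(X) + Λᵀ(L̄⊗I_m)X in Ω × ℝ^{nm}
    (hsaddle : ∀ X ∈ Ω, ∀ Λ : EuclideanSpace ℝ (Fin n × Fin m),
        ftil Xs + ⟪Λ, kronAct Lbar Xs⟫ ≤ ftil Xs + ⟪Λs, kronAct Lbar Xs⟫ ∧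
          ftil Xs + ⟪Λs, kronAct Lbar Xs⟫ ≤ ftil X + ⟪Λs, kronAct Lbar X⟫) :
    ∀ X ∈ Ω, ∀ Λ Z : EuclideanSpace ℝ (Fin n × Fin m),
      (∀ y ∈ Ω, ⟪Z, y - X⟫ ≤ 0) →
      ⟪X - Xs, -Df X - kronAct Lbar (X + Λ) - Z⟫ + ⟪Λ - Λs, kronAct Lbar X⟫ ≤
          (ftil Xs + ⟪Λs, kronAct Lbar Xs⟫) - (ftil X + ⟪Λs, kronAct Lbar X⟫) -
            ⟪X, kronAct Lbar X⟫ ∧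
        (ftil Xs + ⟪Λs, kronAct Lbar Xs⟫) - (ftil X + ⟪Λs, kronAct Lbar X⟫) -
            ⟪X, kronAct Lbar X⟫ ≤ 0 := by
  intro X hX Λ Z hZ
  have hsym := kronAct_symm hLbar (n := n) (m := m)
  -- basic facts
  have h1 : ftil X - ftil Xs ≤ ⟪Df X, X - Xs⟫ := by
    have := grad_ineq hconv (hdiff X) Xs
    have hsub : ⟪Df X, Xs - X⟫ = -⟪Df X, X - Xs⟫ := by
      rw [← inner_neg_right]; congr 1; abel
    linarith [this, hsub.le, hsub.ge]
  have h2 : 0 ≤ ⟪Z, X - Xs⟫ := by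
    have := hZ Xs hXsΩ
    have hsub : ⟪Z, Xs - X⟫ = -⟪Z, X - Xs⟫ := by
      rw [← inner_neg_right]; congr 1; abel
    linarith
  have h3 : 0 ≤ ⟪X, kronAct Lbar X⟫ := kronAct_nonneg hLbar X
  have h4 : ⟪Xs, kronAct Lbar X⟫ = 0 := by
    rw [hsym]; simp [hXsker]
  have h4' : ⟪Λs, kronAct Lbar Xs⟫ = 0 := by simp [hXsker]
  have h5 := (hsaddle X hX Λ).2
  constructor
  · -- expand LHS
    have e1 : ⟪X - Xs, -Df X - kronAct Lbar (X + Λ) - Z⟫ =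
        -⟪X - Xs, Df X⟫ - ⟪X - Xs, kronAct Lbar X⟫ - ⟪X - Xs, kronAct Lbar Λ⟫
          - ⟪X - Xs, Z⟫ := by
      rw [kronAct_add]
      simp [inner_sub_right, inner_add_right, inner_neg_right]
      ring
    have e2 : ⟪X - Xs, kronAct Lbar X⟫ = ⟪X, kronAct Lbar X⟫ := by
      rw [inner_sub_left, h4, sub_zero]
    have e3 : ⟪X - Xs, kronAct Lbar Λ⟫ = ⟪Λ, kronAct Lbar X⟫ := by
      rw [hsym, kronAct_sub, inner_sub_right, hXsker, inner_zero_right, sub_zero]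
    have e4 : ⟪Λ - Λs, kronAct Lbar X⟫ = ⟪Λ, kronAct Lbar X⟫ - ⟪Λs, kronAct Lbar X⟫ :=
      inner_sub_left _ _ _
    have e5 : ⟪X - Xs, Df X⟫ = ⟪Df X, X - Xs⟫ := real_inner_comm _ _
    have e6 : ⟪X - Xs, Z⟫ = ⟪Z, X - Xs⟫ := real_inner_comm _ _
    rw [e1, e2, e3, e4, e5, e6, h4']
    linarith
  · linarith
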